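/- arXiv:2310.01162 — 2 statements merged into one kernel-verified Lean document; each statement's English description precedes it below -/
import Mathlib

section
/- Let K ≥ 2 be a natural number, let u, v ∈ [0,1]^K (every coordinate in [0,1]), and suppose the dot product satisfies ⟨u,v⟩ = Σ_{q=1}^K u_q v_q ≤ C for some constant C ≥ 0. Then for every index d ∈ {1,…,K}, |μ_d(u,v) − (u_d v_d)/K| ≤ (C + 1)/(K(K−1)); in particular, for fixed C the error in approximating μ_d(u,v) by (u_d v_d)/K is of order 1/K². -/
open Finset

/-- The average edge scoring `Δ_S(u,v) = (1/|S|) Σ_{q∈S} u_q v_q`. -/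
noncomputable def avgScore {K : ℕ} (u v : Fin K → ℝ) (S : Finset (Fin K)) : ℝ :=
  (∑ q ∈ S, u q * v q) / S.card

/-- The marginal utility `μ_d(u,v) = Δ_{{1,…,K}}(u,v) − Δ_{{1,…,K}∖{d}}(u,v)`. -/
noncomputable def mu {K : ℕ} (u v : Fin K → ℝ) (d : Fin K) : ℝ :=
  avgScore u v Finset.univ - avgScore u v (Finset.univ.erase d)

/-- For embeddings in the unit hypercube with bounded inner product
`⟨u,v⟩ ≤ C`, the error of approximating `μ_d(u,v)` by `(u_d v_d)/K` is at most
`(C+1)/(K(K−1))`, i.e. of order `1/K²` for fixed `C`. -/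
theorem abs_mu_sub_single_product_le {K : ℕ} (hK : 2 ≤ K) (u v : Fin K → ℝ)
    (hu : ∀ q, u q ∈ Set.Icc (0 : ℝ) 1) (hv : ∀ q, v q ∈ Set.Icc (0 : ℝ) 1)
    (C : ℝ) (hC : 0 ≤ C) (hsum : ∑ q, u q * v q ≤ C) (d : Fin K) :
    |mu u v d - (u d * v d) / (K : ℝ)| ≤ (C + 1) / ((K : ℝ) * ((K : ℝ) - 1)) := by
  have hK1 : (1 : ℝ) ≤ (K : ℝ) - 1 := by
    have : (2 : ℝ) ≤ (K : ℝ) := by exact_mod_cast hK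
    linarith
  have hKpos : (0 : ℝ) < (K : ℝ) := by linarith
  have hKm1pos : (0 : ℝ) < (K : ℝ) - 1 := by linarith
  set S := ∑ q, u q * v q with hS
  set s := u d * v d with hs
  have hsum_erase : ∑ q ∈ Finset.univ.erase d, u q * v q = S - s := by
    rw [hS, ← Finset.add_sum_erase _ _ (Finset.mem_univ d)]; ring
  have hcard : ((Finset.univ : Finset (Fin K)).card : ℝ) = (K : ℝ) := by
    simp
  have hcard_erase : (((Finset.univ : Finset (Fin K)).erase d).card : ℝ) = (K : ℝ) - 1 := by
    rw [Finset.card_erase_of_mem (Finset.mem_univ d)]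
    have h1 : 1 ≤ K := by omega
    rw [Finset.card_univ, Fintype.card_fin, Nat.cast_sub h1, Nat.cast_one]
  have hmu : mu u v d - s / (K : ℝ) = -((S - s) / ((K : ℝ) * ((K : ℝ) - 1))) := by
    unfold mu avgScore
    rw [hsum_erase, hcard, hcard_erase]
    field_simp
    ring
  have hsnn : 0 ≤ s := mul_nonneg (hu d).1 (hv d).1
  have hSs_nn : 0 ≤ S - s := by
    rw [hS, hs, ← hsum_erase]
    exact Finset.sum_nonneg fun q _ => mul_nonneg (hu q).1 (hv q).1
  have hSs_le : S - s ≤ C + 1 := by linarith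
  rw [hmu, abs_neg, abs_div, abs_of_nonneg hSs_nn,
    abs_of_pos (mul_pos hKpos hKm1pos)]
  exact div_le_div_of_nonneg_right hSs_le (mul_pos hKpos hKm1pos).le |>.trans_eq rfl
end

section
/- Let K ≥ 2 be a natural number and u, v ∈ ℝ^K. If the coordinate-wise products u_q v_q (q = 1,…,K) are not all equal, then there exists a dimension d with μ_d(u,v) > 0 and there exists a dimension d' with μ_{d'}(u,v) < 0. In particular, every edge whose embedding products are non-constant across dimensions belongs to at least one explanation subgraph. -/
open Finset

/-- If the coordinate-wise products `u_q v_q` are not all equal, then some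
dimension has strictly positive marginal utility and some dimension has
strictly negative marginal utility. -/
theorem exists_mu_pos_and_neg {K : ℕ} (hK : 2 ≤ K) (u v : Fin K → ℝ)
    (h : ¬ ∀ q q' : Fin K, u q * v q = u q' * v q') :
    (∃ d : Fin K, mu u v d > 0) ∧ (∃ d' : Fin K, mu u v d' < 0) := by
  push_neg at h
  obtain ⟨a, b, hab⟩ := h
  set w : Fin K → ℝ := fun q => u q * v q with hw
  set T : ℝ := ∑ q, w q with hT
  have hK1 : (1:ℝ) < (K:ℝ) := by exact_mod_cast lt_of_lt_of_le one_lt_two hK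
  have hK0 : (0:ℝ) < (K:ℝ) := by linarith
  have hKm : (0:ℝ) < (K:ℝ) - 1 := by linarith
  have hmu : ∀ d : Fin K, mu u v d = ((K:ℝ) * w d - T) / ((K:ℝ) * ((K:ℝ) - 1)) := by
    intro d
    have hsum : ∑ x ∈ Finset.univ.erase d, w x = T - w d := by
      have := Finset.sum_erase_add Finset.univ w (Finset.mem_univ d)
      rw [hT]; linarith
    have hcard : ((Finset.univ.erase d).card : ℝ) = (K:ℝ) - 1 := by
      rw [Finset.card_erase_of_mem (Finset.mem_univ d), Finset.card_univ,
        Fintype.card_fin]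
      have : 1 ≤ K := by omega
      push_cast [Nat.cast_sub this]
      ring
    unfold mu avgScore
    rw [show (∑ q ∈ Finset.univ.erase d, u q * v q) = T - w d from hsum,
      show (∑ q ∈ (Finset.univ : Finset (Fin K)), u q * v q) = T from rfl,
      hcard, Finset.card_univ, Fintype.card_fin]
    field_simp
    ring
  have hsumT : ∑ _d : Fin K, T = (K:ℝ) * T := by
    simp [Finset.sum_const, Finset.card_univ, mul_comm]
  have hsumKw : ∑ d : Fin K, (K:ℝ) * w d = (K:ℝ) * T := by
    rw [← Finset.mul_sum]
  have key : ∀ x y : Fin K, w x < w y →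
      (∃ d : Fin K, T < (K:ℝ) * w d) ∧ (∃ d : Fin K, (K:ℝ) * w d < T) := by
    intro x y hxy
    constructor
    · by_contra hno
      push_neg at hno
      have hstrict : (K:ℝ) * w x < T := lt_of_lt_of_le (by nlinarith) (hno y)
      have hlt : ∑ d : Fin K, (K:ℝ) * w d < ∑ _d : Fin K, T :=
        Finset.sum_lt_sum (fun i _ => hno i) ⟨x, Finset.mem_univ x, hstrict⟩
      rw [hsumKw, hsumT] at hlt
      exact lt_irrefl _ hlt
    · by_contra hno
      push_neg at hno
      have hstrict : T < (K:ℝ) * w y := lt_of_le_of_lt (hno x) (by nlinarith)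
      have hlt : ∑ _d : Fin K, T < ∑ d : Fin K, (K:ℝ) * w d :=
        Finset.sum_lt_sum (fun i _ => hno i) ⟨y, Finset.mem_univ y, hstrict⟩
      rw [hsumKw, hsumT] at hlt
      exact lt_irrefl _ hlt
    
  have hwab : w a ≠ w b := hab
  have hkey : (∃ d : Fin K, T < (K:ℝ) * w d) ∧ (∃ d : Fin K, (K:ℝ) * w d < T) := by
    rcases lt_or_gt_of_ne hwab with hlt | hgt
    · exact key a b hlt
    · exact key b a hgt
  obtain ⟨⟨d, hd⟩, ⟨d', hd'⟩⟩ := hkey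
  constructor
  · exact ⟨d, by rw [hmu d]; exact div_pos (by linarith) (by positivity)⟩
  · exact ⟨d', by rw [hmu d']; exact div_neg_of_neg_of_pos (by linarith) (by positivity)⟩
end
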